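/- arXiv:1912.05618 — 3 statements merged into one kernel-verified Lean document; each statement's English description precedes it below -/
import Mathlib

section
/- Let p be a prime and let n ≥ 1 be an integer. If A ∈ GL(2, ℤ/p^nℤ) has order p^k for some integer k ≥ 0, then k ≤ n. Moreover, for every k with 1 ≤ k ≤ n there exists an element of GL(2, ℤ/p^nℤ) of order exactly p^k. -/
private lemma binom_expand {S : Type*} [CommRing S] (a : S) (m : ℕ) :
    ∃ y : S, (1 + a) ^ m = 1 + m * a + a ^ 2 * y := by
  induction m with
  | zero => exact ⟨0, by simp⟩
  | succ m ih =>
    obtain ⟨y, hy⟩ := ih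
    exact ⟨y + m + a * y, by rw [pow_succ, hy]; push_cast; ring⟩

private lemma step_comm {S : Type*} [CommRing S] (p : ℕ) {j : ℕ} (hj : 1 ≤ j) (x : S) :
    ∃ y : S, (1 + (p : S) ^ j * x) ^ p = 1 + (p : S) ^ (j + 1) * y := by
  obtain ⟨i, rfl⟩ : ∃ i, j = i + 1 := ⟨j - 1, (Nat.succ_pred_eq_of_pos hj).symm⟩
  obtain ⟨y, hy⟩ := binom_expand ((p : S) ^ (i + 1) * x) p
  exact ⟨x + (p : S) ^ i * (x ^ 2 * y), by rw [hy]; ring⟩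

private lemma iter_comm {S : Type*} [CommRing S] (p : ℕ) (x : S) (t : ℕ) :
    ∃ y : S, (1 + (p : S) * x) ^ p ^ t = 1 + (p : S) ^ (1 + t) * y := by
  induction t with
  | zero => exact ⟨x, by simp⟩
  | succ t ih =>
    obtain ⟨y, hy⟩ := ih
    obtain ⟨z, hz⟩ := step_comm p (j := 1 + t) (by omega) y
    refine ⟨z, ?_⟩
    rw [pow_succ, pow_mul, hy, hz]
    ring_nf

private lemma mat_iter {R : Type*} [CommRing R] (p t : ℕ) (C : Matrix (Fin 2) (Fin 2) R) :
    ∃ D : Matrix (Fin 2) (Fin 2) R,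
      (1 + (p : Matrix (Fin 2) (Fin 2) R) * C) ^ p ^ t
        = 1 + (p : Matrix (Fin 2) (Fin 2) R) ^ (1 + t) * D := by
  obtain ⟨y, hy⟩ := iter_comm (S := Polynomial R) p Polynomial.X t
  refine ⟨Polynomial.aeval C y, ?_⟩
  have h := congrArg (Polynomial.aeval C) hy
  simpa [map_pow, map_add, map_mul, map_one, map_natCast, Polynomial.aeval_X] using h

private lemma ker_cast {p n : ℕ} (hp : p.Prime) (hn : 1 ≤ n) (hpn : p ∣ p ^ n) (x : ZMod (p ^ n))
    (hx : ZMod.castHom hpn (ZMod p) x = 0) : ∃ y, x = (p : ZMod (p ^ n)) * y := by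
  haveI : NeZero (p ^ n) := ⟨pow_ne_zero _ hp.ne_zero⟩
  have h1 : ((x.val : ℕ) : ZMod p) = 0 := by
    rwa [ZMod.natCast_val, ← ZMod.castHom_apply (h := hpn)]
  obtain ⟨m, hm⟩ := (ZMod.natCast_eq_zero_iff _ _).mp h1
  refine ⟨(m : ZMod (p ^ n)), ?_⟩
  have h2 : ((x.val : ℕ) : ZMod (p ^ n)) = x := ZMod.natCast_rightInverse x
  rw [← h2, hm]
  push_cast
  ring

private lemma part1 (p n : ℕ) (hp : p.Prime) (hn : 1 ≤ n)
    (A : GL (Fin 2) (ZMod (p ^ n))) (k : ℕ) (hk : orderOf A = p ^ k) : k ≤ n := by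
  haveI : Fact p.Prime := ⟨hp⟩
  have hpn : p ∣ p ^ n := dvd_pow_self p (by omega)
  set R := ZMod (p ^ n) with hR
  set Mat := Matrix (Fin 2) (Fin 2) R with hMat
  let f : GL (Fin 2) R →* GL (Fin 2) (ZMod p) :=
    Units.map ((ZMod.castHom hpn (ZMod p)).mapMatrix).toMonoidHom
  have h1 : orderOf (f A) ∣ p ^ k := hk ▸ orderOf_map_dvd f A
  obtain ⟨j, hj, hfA⟩ := (Nat.dvd_prime_pow hp).mp h1
  have hcard : orderOf (f A) ∣ (p ^ 2 - 1) * (p ^ 2 - p) := by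
    have h := orderOf_dvd_natCard (f A)
    rw [Matrix.card_GL_field, Fin.prod_univ_two, ZMod.card] at h
    simpa using h
  -- show j ≤ 1
  have hj1 : j ≤ 1 := by
    by_contra hc
    push_neg at hc
    have h2 : p ^ 2 ∣ (p ^ 2 - 1) * (p ^ 2 - p) :=
      dvd_trans (pow_dvd_pow p hc) (hfA ▸ hcard)
    have hq2 : 2 ≤ p := hp.two_le
    rw [pow_two] at h2
    have hsub : p * p - p = p * (p - 1) := by
      rw [Nat.mul_sub]
      omega
    rw [hsub, show (p * p - 1) * (p * (p - 1)) = p * ((p * p - 1) * (p - 1)) by ring] at h2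
    have h5 : p ∣ (p * p - 1) * (p - 1) :=
      (Nat.mul_dvd_mul_iff_left (by omega : 0 < p)).mp h2
    have h9 : 1 ≤ p * p := Nat.one_le_iff_ne_zero.mpr (by positivity)
    rcases (Nat.Prime.dvd_mul hp).mp h5 with h6 | h6
    · have h7 : p ∣ p * p := Dvd.intro p rfl
      have h8 : p ∣ p * p - (p * p - 1) := Nat.dvd_sub h7 h6
      rw [Nat.sub_sub_self h9] at h8
      exact absurd (Nat.dvd_one.mp h8) (by omega)
    · have := Nat.le_of_dvd (by omega) h6
      omega
  -- so (f A)^p = 1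
  have hfp : (f A) ^ p = 1 := by
    apply orderOf_dvd_iff_pow_eq_one.mp
    calc orderOf (f A) = p ^ j := hfA
    _ ∣ p ^ 1 := pow_dvd_pow p hj1
    _ = p := pow_one p
  -- matrix level
  set N : Mat := (A : Mat) ^ p with hN
  have hmapN : (ZMod.castHom hpn (ZMod p)).mapMatrix N = 1 := by
    have h := congrArg Units.val hfp
    rw [Units.val_pow_eq_pow_val, Units.val_one] at h
    rw [hN, map_pow]
    simpa [f, RingHom.mapMatrix_apply] using h
  have hker : ∀ i j, ∃ y, (N - 1) i j = (p : R) * y := by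
    intro i j
    apply ker_cast hp hn hpn
    have : (ZMod.castHom hpn (ZMod p)).mapMatrix (N - 1) = 0 := by
      rw [map_sub, hmapN, map_one, sub_self]
    calc ZMod.castHom hpn (ZMod p) ((N - 1) i j)
        = (ZMod.castHom hpn (ZMod p)).mapMatrix (N - 1) i j := rfl
      _ = 0 := by rw [this]; rfl
  choose Y hY using hker
  set Cmat : Mat := Matrix.of Y with hC
  have hNeq : N = 1 + (p : Mat) * Cmat := by
    have hsub : N - 1 = (p : Mat) * Cmat := by
      rw [← nsmul_eq_mul]
      ext i j
      rw [Matrix.smul_apply, hY i j]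
      simp [Cmat, nsmul_eq_mul]
    rw [← hsub, add_comm, sub_add_cancel]
  obtain ⟨D, hD⟩ := mat_iter p (n - 1) Cmat
  have hpow0 : (p : Mat) ^ (1 + (n - 1)) = 0 := by
    have h1n : 1 + (n - 1) = n := by omega
    rw [h1n]
    have hz : ((p ^ n : ℕ) : R) = 0 := ZMod.natCast_self _
    have : ((p : Mat)) ^ n = ((p ^ n : ℕ) : Mat) := by rw [Nat.cast_pow]
    rw [this]
    have : ((p ^ n : ℕ) : Mat) = ((p ^ n : ℕ) : R) • (1 : Mat) := by
      rw [Nat.cast_smul_eq_nsmul, nsmul_eq_mul, mul_one]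
    rw [this, hz, zero_smul]
  have hA1 : (A : Mat) ^ p ^ n = 1 := by
    have hnn : p ^ n = p * p ^ (n - 1) := by
      rw [← pow_succ']
      congr 1
      omega
    have hsplit : (A : Mat) ^ p ^ n = ((A : Mat) ^ p) ^ p ^ (n - 1) := by
      rw [← pow_mul, ← hnn]
    rw [hsplit, ← hN, hNeq, hD, hpow0, zero_mul, add_zero]
  have hU : A ^ p ^ n = 1 := by
    ext
    rw [Units.val_pow_eq_pow_val, hA1, Units.val_one]
  have hdvd : p ^ k ∣ p ^ n := hk ▸ orderOf_dvd_of_pow_eq_one hU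
  exact (Nat.pow_dvd_pow_iff_le_right hp.one_lt).mp hdvd


private lemma unipotent_pow {R : Type*} [CommRing R] (a : R) (m : ℕ) :
    (!![1, a; 0, 1] : Matrix (Fin 2) (Fin 2) R) ^ m = !![1, (m : R) * a; 0, 1] := by
  induction m with
  | zero => simp [Matrix.one_fin_two]
  | succ m ih =>
    rw [pow_succ, ih, Matrix.mul_fin_two]
    push_cast
    norm_num
    ring

private lemma part2 (p n : ℕ) (hp : p.Prime) (hn : 1 ≤ n) (k : ℕ) (hk1 : 1 ≤ k) (hkn : k ≤ n) :
    ∃ A : GL (Fin 2) (ZMod (p ^ n)), orderOf A = p ^ k := by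
  haveI : Fact p.Prime := ⟨hp⟩
  set R := ZMod (p ^ n) with hR
  set a : R := (p : R) ^ (n - k) with ha
  have hmul : (!![1, a; 0, 1] : Matrix (Fin 2) (Fin 2) R) * !![1, -a; 0, 1] = 1 := by
    rw [Matrix.mul_fin_two, Matrix.one_fin_two]
    norm_num
  have hmul2 : (!![1, -a; 0, 1] : Matrix (Fin 2) (Fin 2) R) * !![1, a; 0, 1] = 1 := by
    rw [Matrix.mul_fin_two, Matrix.one_fin_two]
    norm_num
  set A : GL (Fin 2) R := ⟨!![1, a; 0, 1], !![1, -a; 0, 1], hmul, hmul2⟩ with hA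
  refine ⟨A, ?_⟩
  have key : ∀ t : ℕ, ((A ^ t : GL (Fin 2) R) : Matrix (Fin 2) (Fin 2) R)
      = !![1, (t : R) * a; 0, 1] := by
    intro t
    rw [Units.val_pow_eq_pow_val]
    exact unipotent_pow a t
  obtain ⟨m, rfl⟩ : ∃ m, k = m + 1 := ⟨k - 1, by omega⟩
  apply orderOf_eq_prime_pow
  · intro hone
    have h1 : ((p ^ m : ℕ) : R) * a = 0 := by
      have h2 := congrArg Units.val hone
      rw [key, Units.val_one, Matrix.one_fin_two] at h2
      have h3 := congrArg (fun M : Matrix (Fin 2) (Fin 2) R => M 0 1) h2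
      simpa using h3
    have h4 : ((p ^ (n - 1) : ℕ) : R) = 0 := by
      push_cast at h1 ⊢
      rw [show n - 1 = m + (n - (m + 1)) by omega, pow_add]
      rwa [ha] at h1
    rw [ZMod.natCast_eq_zero_iff] at h4
    have h5 := Nat.le_of_dvd (Nat.pow_pos hp.pos) h4
    have h6 := Nat.pow_lt_pow_right hp.one_lt (show n - 1 < n by omega)
    omega
  · ext
    rw [key, Units.val_one, Matrix.one_fin_two]
    have h7 : ((p ^ (m + 1) : ℕ) : R) * a = 0 := by
      push_cast
      rw [ha, ← pow_add, show m + 1 + (n - (m + 1)) = n by omega]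
      exact_mod_cast ZMod.natCast_self (p ^ n)
    rw [h7]

theorem orders_of_p_power_elements_GL2 (p n : ℕ) (hp : p.Prime) (hn : 1 ≤ n) :
    (∀ (A : GL (Fin 2) (ZMod (p ^ n))) (k : ℕ), orderOf A = p ^ k → k ≤ n) ∧
    (∀ k : ℕ, 1 ≤ k → k ≤ n → ∃ A : GL (Fin 2) (ZMod (p ^ n)), orderOf A = p ^ k) := by
  exact ⟨fun A k hk => part1 p n hp hn A k hk, fun k hk1 hkn => part2 p n hp hn k hk1 hkn⟩
end

section
/- Let p be a prime, let n ≥ 1 be an integer, and let A ∈ GL(2, ℤ/p^nℤ) be a matrix whose order is divisible by φ(p^{n+1}) = p^n(p−1). Then the reduction of det(A) modulo p is a square in ℤ/pℤ. -/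
open Matrix Finset

/-- Binomial step: `(1 + p^j K)^p = 1 + p^(j+1) K'`. -/
lemma pow_step_aux {R : Type*} [Ring R] (p j : ℕ) (hj : 1 ≤ j) (K : R) :
    ∃ K' : R, (1 + (p : R) ^ j * K) ^ p = 1 + (p : R) ^ (j + 1) * K' := by
  set X : R := (p : R) ^ j * K with hX
  have hcomm : Commute (1 : R) X := Commute.one_left _
  have hdvd : ((p : R) ^ (j + 1)) ∣ (1 + X) ^ p - 1 := by
    rw [hcomm.add_pow]
    rw [Finset.sum_range_succ]
    simp only [one_pow, Nat.sub_self, pow_zero, Nat.choose_self, Nat.cast_one, mul_one, one_mul]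
    rw [add_sub_cancel_right]
    apply Finset.dvd_sum
    intro m hm
    rw [Finset.mem_range] at hm
    have hXpow : ∀ k : ℕ, X ^ k = (p : R) ^ (j * k) * K ^ k := by
      intro k
      rw [hX, (Commute.pow_left (Nat.cast_commute p K) j).mul_pow, ← pow_mul]
    rcases Nat.lt_or_ge m (p - 1) with h | h
    · -- k = p - m ≥ 2
      have hk : 2 ≤ p - m := by omega
      rw [hXpow]
      apply dvd_mul_of_dvd_left
      apply dvd_mul_of_dvd_left
      apply pow_dvd_pow
      nlinarith [Nat.one_le_iff_ne_zero.mp hj]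
    · -- m = p - 1, k = 1, use choose p (p-1) = p
      have hm' : m = p - 1 := by omega
      have hp1 : 1 ≤ p := by omega
      have hchoose : Nat.choose p m = p := by
        rw [hm', Nat.choose_symm hp1, Nat.choose_one_right]
      have hsub : p - m = 1 := by omega
      rw [hsub, pow_one, hchoose, hX]
      refine ⟨K, ?_⟩
      rw [mul_assoc, (Nat.cast_commute p K).symm.eq, ← mul_assoc, ← pow_succ]
  obtain ⟨K', hK'⟩ := hdvd
  rw [sub_eq_iff_eq_add] at hK'
  exact ⟨K', by rw [hK', add_comm]⟩

lemma pow_iter_aux {R : Type*} [Ring R] (p : ℕ) (K : R) :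
    ∀ m : ℕ, ∃ K' : R, (1 + (p : R) * K) ^ (p ^ m) = 1 + (p : R) ^ (m + 1) * K' := by
  intro m
  induction m with
  | zero => exact ⟨K, by simp⟩
  | succ m ih =>
      obtain ⟨K', hK'⟩ := ih
      obtain ⟨K'', hK''⟩ := pow_step_aux p (m + 1) (Nat.le_add_left 1 m) K'
      exact ⟨K'', by rw [pow_succ, pow_mul, hK', hK'']⟩

lemma zmod_entry_lift (p n : ℕ) [Fact p.Prime] (hn : n ≠ 0)
    (x : ZMod (p ^ n)) (hx : ZMod.castHom (dvd_pow_self p hn) (ZMod p) x = 0) :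
    ∃ y : ZMod (p ^ n), x = (p : ZMod (p ^ n)) * y := by
  have hp : p.Prime := Fact.out
  haveI : NeZero (p ^ n) := ⟨pow_ne_zero n hp.ne_zero⟩
  have h1 : ((x.val : ℕ) : ZMod p) = 0 := by
    rwa [ZMod.natCast_val, ← ZMod.castHom_apply (h := dvd_pow_self p hn)]
  rw [ZMod.natCast_eq_zero_iff] at h1
  obtain ⟨c, hc⟩ := h1
  refine ⟨(c : ZMod (p ^ n)), ?_⟩
  have : ((x.val : ℕ) : ZMod (p ^ n)) = x := by
    rw [ZMod.natCast_val, ZMod.cast_id]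
  rw [← this, hc]
  push_cast
  ring

lemma ker_exponent (p n : ℕ) [Fact p.Prime] (hn : n ≠ 0)
    (M : Matrix (Fin 2) (Fin 2) (ZMod (p ^ n)))
    (hM : M.map (ZMod.castHom (dvd_pow_self p hn) (ZMod p)) = 1) :
    M ^ (p ^ (n - 1)) = 1 := by
  have hp : p.Prime := Fact.out
  have hlift : ∀ i j, ∃ y, M i j - (1 : Matrix (Fin 2) (Fin 2) (ZMod (p ^ n))) i j
      = (p : ZMod (p ^ n)) * y := by
    intro i j
    apply zmod_entry_lift p n hn
    have h1 : (M.map (ZMod.castHom (dvd_pow_self p hn) (ZMod p))) i j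
        = (1 : Matrix (Fin 2) (Fin 2) (ZMod p)) i j := by rw [hM]
    rw [Matrix.map_apply] at h1
    rw [map_sub, h1]
    by_cases hij : i = j
    · subst hij; rw [Matrix.one_apply_eq, Matrix.one_apply_eq, _root_.map_one, sub_self]
    · rw [Matrix.one_apply_ne hij, Matrix.one_apply_ne hij, map_zero, sub_self]
  choose K hK using hlift
  have hMeq : M = 1 + (p : Matrix (Fin 2) (Fin 2) (ZMod (p ^ n))) * Matrix.of K := by
    have : (p : Matrix (Fin 2) (Fin 2) (ZMod (p ^ n))) * Matrix.of K
        = (p : ℕ) • Matrix.of K := (nsmul_eq_mul _ _).symm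
    rw [this]
    ext i j
    have := hK i j
    rw [sub_eq_iff_eq_add] at this
    rw [Matrix.add_apply, Matrix.smul_apply, nsmul_eq_mul, this, add_comm]
    rfl
  obtain ⟨K', hK'⟩ := pow_iter_aux p (Matrix.of K) (n - 1)
  rw [hMeq, hK', Nat.sub_add_cancel (Nat.one_le_iff_ne_zero.mpr hn)]
  have : ((p : Matrix (Fin 2) (Fin 2) (ZMod (p ^ n)))) ^ n = 0 := by
    rw [← Nat.cast_pow, CharP.cast_eq_zero]
  rw [this, zero_mul, add_zero]

lemma ch_two {F : Type*} [CommRing F] (N : Matrix (Fin 2) (Fin 2) F) :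
    N * N = (Matrix.trace N) • N - (N.det) • 1 := by
  ext i j
  fin_cases i <;> fin_cases j <;>
    simp [Matrix.mul_apply, Matrix.trace, Matrix.det_fin_two, Fin.sum_univ_two,
      Matrix.one_apply, Matrix.diag] <;> ring

lemma sq_zero_of_pow_zero {F : Type*} [Field F] (p : ℕ) (hp : 2 ≤ p)
    (N : Matrix (Fin 2) (Fin 2) F) (hN : N ^ p = 0) (hN0 : N ≠ 0) : N * N = 0 := by
  have hdet : N.det = 0 := by
    have h : N.det ^ p = 0 := by rw [← Matrix.det_pow, hN, Matrix.det_zero]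
    exact pow_eq_zero_iff (by omega) |>.mp h
  have hch : N * N = (Matrix.trace N) • N := by rw [ch_two, hdet, zero_smul, sub_zero]
  have hpow : ∀ k, N ^ (k + 1) = (Matrix.trace N) ^ k • N := by
    intro k
    induction k with
    | zero => simp
    | succ k ih =>
        rw [pow_succ, ih, Matrix.smul_mul, hch, smul_smul, ← pow_succ]
  have hz : (Matrix.trace N) ^ (p - 1) • N = 0 := by
    rw [← hpow, Nat.sub_add_cancel (by omega)]; exact hN
  rcases smul_eq_zero.mp hz with h | h
  · have ht : Matrix.trace N = 0 := pow_eq_zero_iff (by omega) |>.mp h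
    rw [hch, ht, zero_smul]
  · exact absurd h hN0

lemma det_sq_aux {F : Type*} [Field F] (N B : Matrix (Fin 2) (Fin 2) F)
    (h2 : N * N = 0) (h0 : N ≠ 0) (hc : B * N = N * B) : ∃ x : F, B.det = x ^ 2 := by
  set a := N 0 0 with ha
  set b := N 0 1 with hb
  set c := N 1 0 with hcdef
  set d := N 1 1 with hd
  set e := B 0 0 with he
  set f := B 0 1 with hf
  set g := B 1 0 with hg
  set h := B 1 1 with hh
  have E := fun (i j : Fin 2) => congrFun (congrFun h2 i) j
  have e00 : a * a + b * c = 0 := by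
    have := E 0 0; simpa [Matrix.mul_apply, Fin.sum_univ_two] using this
  have e01 : a * b + b * d = 0 := by
    have := E 0 1; simpa [Matrix.mul_apply, Fin.sum_univ_two] using this
  have e10 : c * a + d * c = 0 := by
    have := E 1 0; simpa [Matrix.mul_apply, Fin.sum_univ_two] using this
  have e11 : c * b + d * d = 0 := by
    have := E 1 1; simpa [Matrix.mul_apply, Fin.sum_univ_two] using this
  have hdneg : d = -a := by
    by_contra hda
    have had : a + d ≠ 0 := fun hsum => hda (by linear_combination hsum)
    have hb0 : b = 0 := by
      rcases mul_eq_zero.mp (show b * (a + d) = 0 by linear_combination e01) with h' | h'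
      · exact h'
      · exact absurd h' had
    have hc0 : c = 0 := by
      rcases mul_eq_zero.mp (show c * (a + d) = 0 by linear_combination e10) with h' | h'
      · exact h'
      · exact absurd h' had
    have ha0 : a = 0 := by
      have : a * a = 0 := by rw [hb0] at e00; linear_combination e00
      exact mul_self_eq_zero.mp this
    have hd0 : d = 0 := by
      have : d * d = 0 := by rw [hc0] at e11; linear_combination e11
      exact mul_self_eq_zero.mp this
    apply h0
    ext i j
    fin_cases i <;> fin_cases j <;>
      simp only [Matrix.zero_apply] <;> [exact ha0; exact hb0; exact hc0; exact hd0]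
  have hbc : a * a + b * c = 0 := e00
  have C := fun (i j : Fin 2) => congrFun (congrFun hc i) j
  have c00 : e * a + f * c = a * e + b * g := by
    have := C 0 0; simpa [Matrix.mul_apply, Fin.sum_univ_two] using this
  have c01 : e * b + f * d = a * f + b * h := by
    have := C 0 1; simpa [Matrix.mul_apply, Fin.sum_univ_two] using this
  have c10 : g * a + h * c = c * e + d * g := by
    have := C 1 0; simpa [Matrix.mul_apply, Fin.sum_univ_two] using this
  rw [hdneg] at c01 c10
  have hdet : B.det = e * h - f * g := Matrix.det_fin_two B
  by_cases hbz : b = 0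
  · have ha0 : a = 0 := by
      have : a * a = 0 := by rw [hbz] at hbc; linear_combination hbc
      exact mul_self_eq_zero.mp this
    have hcz : c ≠ 0 := by
      intro hcc
      apply h0
      ext i j
      fin_cases i <;> fin_cases j <;> simp only [Matrix.zero_apply]
      · exact ha0
      · exact hbz
      · exact hcc
      · show d = 0; rw [hdneg, ha0, neg_zero]
    have hf0 : f = 0 := by
      have : f * c = 0 := by rw [hbz, ha0] at c00; linear_combination c00
      rcases mul_eq_zero.mp this with h' | h'
      · exact h'
      · exact absurd h' hcz
    have heh : e = h := by
      have : c * (h - e) = 0 := by rw [ha0] at c10; linear_combination c10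
      rcases mul_eq_zero.mp this with h' | h'
      · exact absurd h' hcz
      · linear_combination -h'
    refine ⟨h, ?_⟩
    rw [hdet, heh, hf0]
    ring
  · refine ⟨h + a * f / b, ?_⟩
    rw [hdet]
    field_simp
    linear_combination (h * b) * c01 + (f * b) * c00 - f ^ 2 * hbc

theorem det_is_square_of_large_order (p n : ℕ) (hp : p.Prime) (hn : 1 ≤ n)
    (A : GL (Fin 2) (ZMod (p ^ n)))
    (hA : Nat.totient (p ^ (n + 1)) ∣ orderOf A) :
    ∃ b : ZMod p,
      ZMod.castHom (dvd_pow_self p (Nat.one_le_iff_ne_zero.mp hn)) (ZMod p)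
        ((A : Matrix (Fin 2) (Fin 2) (ZMod (p ^ n))).det) = b ^ 2 := by
  haveI : Fact p.Prime := ⟨hp⟩
  have hn' : n ≠ 0 := Nat.one_le_iff_ne_zero.mp hn
  set f := ZMod.castHom (dvd_pow_self p hn') (ZMod p) with hf
  set B := Matrix.GeneralLinearGroup.map f A with hB
  have hpn : p ^ n ∣ orderOf A := by
    refine dvd_trans ?_ hA
    rw [Nat.totient_prime_pow hp (Nat.succ_pos n), Nat.succ_sub_one]
    exact dvd_mul_right _ _
  have hcoe : (B : Matrix (Fin 2) (Fin 2) (ZMod p))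
      = (A : Matrix (Fin 2) (Fin 2) (ZMod (p ^ n))).map f := rfl
  have horder : orderOf A ∣ orderOf B * p ^ (n - 1) := by
    apply orderOf_dvd_of_pow_eq_one
    rw [pow_mul]
    have h1 : ((A ^ orderOf B : GL (Fin 2) (ZMod (p ^ n)))
        : Matrix (Fin 2) (Fin 2) (ZMod (p ^ n))).map f = 1 := by
      have hmap1 : Matrix.GeneralLinearGroup.map f (A ^ orderOf B) = 1 := by
        rw [map_pow, ← hB, pow_orderOf_eq_one]
      calc ((A ^ orderOf B : GL (Fin 2) (ZMod (p ^ n)))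
            : Matrix (Fin 2) (Fin 2) (ZMod (p ^ n))).map f
          = ((Matrix.GeneralLinearGroup.map f (A ^ orderOf B) : GL (Fin 2) (ZMod p))
            : Matrix (Fin 2) (Fin 2) (ZMod p)) := rfl
        _ = ((1 : GL (Fin 2) (ZMod p)) : Matrix (Fin 2) (Fin 2) (ZMod p)) := by rw [hmap1]
        _ = 1 := Units.val_one
    have h2 := ker_exponent p n hn' _ h1
    apply Units.ext
    rw [Units.val_pow_eq_pow_val, Units.val_one]
    exact h2
  have hpB : p ∣ orderOf B := by
    have h3 : p ^ n ∣ orderOf B * p ^ (n - 1) := hpn.trans horder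
    have hpos : 0 < p ^ (n - 1) := pow_pos hp.pos _
    have h4 : p * p ^ (n - 1) = p ^ n := by
      rw [← pow_succ']
      congr 1
      omega
    refine (Nat.mul_dvd_mul_iff_right hpos).mp ?_
    rw [h4]
    exact h3
  have hBpos : 0 < orderOf B := orderOf_pos B
  set m := orderOf B / p with hm
  have hmdvd : m ∣ orderOf B := Nat.div_dvd_of_dvd hpB
  have hC : orderOf (B ^ m) = p := by
    rw [orderOf_pow, Nat.gcd_eq_right hmdvd, Nat.div_div_self hpB hBpos.ne']
  set C := B ^ m with hCdef
  set Cm : Matrix (Fin 2) (Fin 2) (ZMod p) := (C : Matrix (Fin 2) (Fin 2) (ZMod p)) with hCm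
  have hCp : Cm ^ p = 1 := by
    have h5 := pow_orderOf_eq_one C
    rw [hC] at h5
    rw [hCm, ← Units.val_pow_eq_pow_val, h5, Units.val_one]
  have hCne : Cm ≠ 1 := by
    intro h1
    have hCone : C = 1 := Units.ext (by rw [← hCm, h1, Units.val_one])
    rw [hCone, orderOf_one] at hC
    exact hp.one_lt.ne' hC.symm
  set N := Cm - 1 with hN
  have hNp : N ^ p = 0 := by
    rw [hN, sub_pow_char_of_commute p (Commute.one_right Cm), hCp, one_pow, sub_self]
  have hN0 : N ≠ 0 := fun h => hCne (sub_eq_zero.mp (hN ▸ h))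
  have hNN : N * N = 0 := sq_zero_of_pow_zero p hp.two_le N hNp hN0
  have hcomm : (B : Matrix (Fin 2) (Fin 2) (ZMod p)) * N
      = N * (B : Matrix (Fin 2) (Fin 2) (ZMod p)) := by
    have hBC : (B : Matrix (Fin 2) (Fin 2) (ZMod p)) * Cm
        = Cm * (B : Matrix (Fin 2) (Fin 2) (ZMod p)) := by
      rw [hCm, hCdef, Units.val_pow_eq_pow_val]
      exact Commute.pow_right (Commute.refl _) m
    rw [hN, mul_sub, sub_mul, hBC, mul_one, one_mul]
  obtain ⟨x, hx⟩ := det_sq_aux N (B : Matrix (Fin 2) (Fin 2) (ZMod p)) hNN hN0 hcomm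
  refine ⟨x, ?_⟩
  show f ((A : Matrix (Fin 2) (Fin 2) (ZMod (p ^ n))).det) = x ^ 2
  calc f ((A : Matrix (Fin 2) (Fin 2) (ZMod (p ^ n))).det)
      = ((A : Matrix (Fin 2) (Fin 2) (ZMod (p ^ n))).map f).det := RingHom.map_det f _
    _ = x ^ 2 := by rw [← hcoe]; exact hx
end

section
/- Let p be an odd prime and let N_s(p) be the subgroup of GL(2, ℤ/pℤ) consisting of all matrices that are either diagonal or antidiagonal (the normalizer of the split Cartan subgroup). Let G be a subgroup of N_s(p) such that the determinant map det : G → (ℤ/pℤ)^× is surjective and such that the commutator subgroup G′ = [G,G] is nontrivial. Then G/G′ is isomorphic to (ℤ/pℤ)^×, or to (ℤ/pℤ)^× × ℤ/2ℤ, or to ℤ/2(p−1)ℤ. Moreover, if G contains an element of trace 0 and determinant −1, then G/G′ is isomorphic to (ℤ/pℤ)^× or to (ℤ/pℤ)^× × ℤ/2ℤ. -/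
private theorem zpowersIsCyclic {G : Type*} [Group G] (a : G) : IsCyclic ↥(Subgroup.zpowers a) :=
  ⟨⟨⟨a, Subgroup.mem_zpowers a⟩, fun x => by
    obtain ⟨n, hn⟩ := x.2
    exact ⟨n, Subtype.ext (by simpa using hn)⟩⟩⟩

private theorem card_mult_zmod (N : ℕ) : Nat.card (Multiplicative (ZMod N)) = N :=
  (Nat.card_congr Multiplicative.toAdd).trans (Nat.card_zmod N)

private theorem prod_case {E C : Type*} [CommGroup E] [Finite E] [Group C] [Finite C] [IsCyclic C]
    (x y : E) (hx : orderOf x = Nat.card C) (hy : y ^ 2 = 1) (hyx : y ∉ Subgroup.zpowers x)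
    (hcard : Nat.card E = Nat.card C * 2) : Nonempty (E ≃* C × Multiplicative (ZMod 2)) := by
  haveI : Fact (Nat.Prime 2) := ⟨Nat.prime_two⟩
  have hy1 : y ≠ 1 := fun h => hyx (h ▸ (Subgroup.zpowers x).one_mem)
  have hyord : orderOf y = 2 := orderOf_eq_prime hy hy1
  haveI cycX : IsCyclic ↥(Subgroup.zpowers x) := zpowersIsCyclic x
  haveI cycY : IsCyclic ↥(Subgroup.zpowers y) := zpowersIsCyclic y
  set ψ : ↥(Subgroup.zpowers x) × ↥(Subgroup.zpowers y) →* E :=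
    ((Subgroup.zpowers x).subtype).coprod ((Subgroup.zpowers y).subtype) with hψ
  have hinj : Function.Injective ψ := by
    rw [← MonoidHom.ker_eq_bot_iff, eq_bot_iff]
    rintro ⟨a, b⟩ hab
    rw [MonoidHom.mem_ker] at hab
    have hab' : (a : E) * (b : E) = 1 := hab
    have hb : (b : E) = 1 ∨ (b : E) = y := by
      obtain ⟨k, hk⟩ := b.2
      rcases Int.even_or_odd k with ⟨l, hl⟩ | ⟨l, hl⟩
      · left
        have h1 : (b : E) = (y ^ 2) ^ l := by simp only [← hk, hl]; group
        rw [h1, hy, one_zpow]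
      · right
        have h1 : (b : E) = (y ^ 2) ^ l * y := by simp only [← hk, hl]; group
        rw [h1, hy, one_zpow, one_mul]
    rcases hb with hb | hb
    · have ha : (a : E) = 1 := by rwa [hb, mul_one] at hab'
      simp only [Subgroup.mem_bot, Prod.mk_eq_one]
      exact ⟨Subtype.ext ha, Subtype.ext hb⟩
    · exfalso
      apply hyx
      have hy' : y = ((a : E))⁻¹ := by
        rw [hb] at hab'
        exact (eq_inv_of_mul_eq_one_right hab')
      rw [hy']
      exact (Subgroup.zpowers x).inv_mem a.2
  have hbij : Function.Bijective ψ := (Nat.bijective_iff_injective_and_card ψ).mpr ⟨hinj, by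
    rw [Nat.card_prod, Nat.card_zpowers, Nat.card_zpowers, hx, hyord, hcard]⟩
  have e1 : ↥(Subgroup.zpowers x) ≃* C := mulEquivOfCyclicCardEq (by rw [Nat.card_zpowers, hx])
  have e2 : ↥(Subgroup.zpowers y) ≃* Multiplicative (ZMod 2) :=
    mulEquivOfCyclicCardEq (by rw [Nat.card_zpowers, hyord, card_mult_zmod])
  exact ⟨(MulEquiv.ofBijective ψ hbij).symm.trans (MulEquiv.prodCongr e1 e2)⟩

private theorem cyclic_case {E C : Type*} [CommGroup E] [Finite E] [Group C] [Finite C]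
    (δ : E →* C) (z : E) (hE : Nat.card E = Nat.card C * 2)
    (hz : orderOf z = 2 * Nat.card C) :
    Nonempty (E ≃* Multiplicative (ZMod (2 * Nat.card C))) ∧ ∀ t : E, t ^ 2 = 1 → δ t = 1 := by
  have hn0 : 0 < Nat.card C := Nat.card_pos
  have hzcard : orderOf z = Nat.card E := by rw [hz, hE]; ring
  haveI := isCyclic_of_orderOf_eq_card z hzcard
  constructor
  · exact ⟨mulEquivOfCyclicCardEq (by rw [card_mult_zmod, hE]; ring)⟩
  · intro t ht
    have htop : Subgroup.zpowers z = ⊤ :=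
      Subgroup.eq_top_of_card_eq _ (by rw [Nat.card_zpowers, hzcard])
    have htz : t ∈ Subgroup.zpowers z := htop ▸ Subgroup.mem_top t
    obtain ⟨j, hj⟩ := htz
    have hj' : z ^ j = t := hj
    have h2j : z ^ (2 * j) = 1 := by
      rw [mul_comm, zpow_mul, hj']
      rw [show (2:ℤ) = ((2:ℕ):ℤ) by norm_cast, zpow_natCast]
      exact ht
    have hdvd : ((orderOf z : ℤ)) ∣ 2 * j := orderOf_dvd_iff_zpow_eq_one.mpr h2j
    rw [hz] at hdvd
    push_cast at hdvd
    have hnj : ((Nat.card C : ℤ)) ∣ j := by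
      rcases hdvd with ⟨u, hu⟩
      have hu' : 2 * j = 2 * ((Nat.card C : ℤ) * u) := by rw [hu]; ring
      exact ⟨u, by omega⟩
    obtain ⟨u, hu⟩ := hnj
    have : δ t = (δ z) ^ (((Nat.card C : ℤ)) * u) := by rw [← hj', hu, map_zpow]
    rw [this, zpow_mul, zpow_natCast, pow_card_eq_one', one_zpow]

private theorem abstract_classify {E C : Type*} [CommGroup E] [Finite E] [CommGroup C] [Finite C]
    [IsCyclic C] (δ : E →* C) (hsurj : Function.Surjective ⇑δ)
    (heven : Even (Nat.card C))
    (hcard : Nat.card E ≤ 2 * Nat.card C) :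
    Nonempty (E ≃* C) ∨ Nonempty (E ≃* C × Multiplicative (ZMod 2)) ∨
      (Nonempty (E ≃* Multiplicative (ZMod (2 * Nat.card C))) ∧ ∀ t : E, t ^ 2 = 1 → δ t = 1) := by
  have hn0 : 0 < Nat.card C := Nat.card_pos
  have h1 : Nat.card E = Nat.card C * Nat.card δ.ker := by
    rw [Subgroup.card_eq_card_quotient_mul_card_subgroup δ.ker]
    congr 1
    rw [Nat.card_congr (QuotientGroup.quotientKerEquivRange δ).toEquiv,
      MonoidHom.range_eq_top.mpr hsurj]
    exact Subgroup.card_top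
  have hker_pos : 0 < Nat.card δ.ker := Nat.card_pos
  have hker_le : Nat.card δ.ker ≤ 2 := by
    rw [h1] at hcard
    exact Nat.le_of_mul_le_mul_left (by linarith) hn0
  interval_cases hk : Nat.card δ.ker
  · -- ker trivial
    have hbot : δ.ker = ⊥ := Subgroup.card_eq_one.mp hk
    exact Or.inl ⟨MulEquiv.ofBijective δ ⟨(MonoidHom.ker_eq_bot_iff δ).mp hbot, hsurj⟩⟩
  · -- ker of order 2
    have hE : Nat.card E = Nat.card C * 2 := h1
    obtain ⟨g, hg⟩ := IsCyclic.exists_generator (α := C)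
    have hgord : orderOf g = Nat.card C := orderOf_eq_card_of_forall_mem_zpowers hg
    obtain ⟨x, hx⟩ := hsurj g
    have hxord₁ : Nat.card C ∣ orderOf x := by
      rw [← hgord]; rw [← hx]; exact orderOf_map_dvd δ x
    have hxord₂ : orderOf x ∣ 2 * Nat.card C := by
      rw [mul_comm, ← hE]; exact orderOf_dvd_natCard x
    obtain ⟨t, ht⟩ := hxord₁
    have ht2 : t ∣ 2 := by
      have h2' : orderOf x ∣ Nat.card C * 2 := by rw [mul_comm]; exact hxord₂
      have h3' : Nat.card C * t ∣ Nat.card C * 2 := ht ▸ h2'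
      exact (Nat.mul_dvd_mul_iff_left hn0).mp h3'
    rcases (Nat.dvd_prime Nat.prime_two).mp ht2 with ht1 | ht1
    · -- orderOf x = n : dichotomy
      have hxn : orderOf x = Nat.card C := by rw [ht, ht1, mul_one]
      have hne : Subgroup.zpowers x ≠ ⊤ := by
        intro hcon
        have := Subgroup.card_top (G := E)
        rw [← hcon, Nat.card_zpowers, hxn, hE] at this
        omega
      have hex : ∃ y0 : E, y0 ∉ Subgroup.zpowers x := by
        by_contra hcon
        push_neg at hcon
        exact hne ((Subgroup.eq_top_iff' (Subgroup.zpowers x)).mpr hcon)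
      obtain ⟨y0, hy0⟩ := hex
      have hy2 : y0 ^ 2 ∈ Subgroup.zpowers x := by
        have hQ : Nat.card (E ⧸ Subgroup.zpowers x) = 2 := by
          have h2 := Subgroup.card_eq_card_quotient_mul_card_subgroup (Subgroup.zpowers x)
          rw [hE, Nat.card_zpowers, hxn] at h2
          have hq0 : 0 < Nat.card (E ⧸ Subgroup.zpowers x) := Nat.card_pos
          nlinarith [h2]
        have hq1 : ((y0 : E ⧸ Subgroup.zpowers x)) ^ 2 = 1 := by
          have : orderOf ((y0 : E ⧸ Subgroup.zpowers x)) ∣ 2 := hQ ▸ orderOf_dvd_natCard _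
          exact orderOf_dvd_iff_pow_eq_one.mp this
        rwa [← QuotientGroup.mk_pow, QuotientGroup.eq_one_iff] at hq1
      obtain ⟨m, hm⟩ := hy2
      have hm' : x ^ m = y0 ^ 2 := hm
      rcases Int.even_or_odd m with ⟨l, hl⟩ | ⟨l, hl⟩
      · -- even : product case
        set y := y0 * x ^ (-l) with hy
        have hysq : y ^ 2 = 1 := by
          have : y ^ 2 = y0 ^ 2 * (x ^ (-l)) ^ 2 := mul_pow _ _ 2
          rw [this, ← hm', hl]
          group
        have hynot : y ∉ Subgroup.zpowers x := by
          intro hcon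
          apply hy0
          have : y0 = y * x ^ l := by rw [hy]; group
          rw [this]
          exact (Subgroup.zpowers x).mul_mem hcon (zpow_mem (Subgroup.mem_zpowers x) l)
        exact Or.inr (Or.inl (prod_case x y hxn hysq hynot hE))
      · -- odd : cyclic case
        set z := y0 * x ^ (-l) with hz
        have hzsq : z ^ 2 = x := by
          have : z ^ 2 = y0 ^ 2 * (x ^ (-l)) ^ 2 := mul_pow _ _ 2
          rw [this, ← hm', hl]
          group
        have hzord : orderOf z = 2 * Nat.card C := by
          have hd1 : Nat.card C ∣ orderOf z := by
            rw [← hxn, ← hzsq]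
            exact orderOf_pow_dvd 2
          have hd2 : orderOf z ∣ 2 * Nat.card C := by
            rw [mul_comm, ← hE]; exact orderOf_dvd_natCard z
          have hzn : z ^ Nat.card C ≠ 1 := by
            obtain ⟨h, hh⟩ := heven
            have hhpos : 0 < h := by omega
            intro hcon
            have hxh : x ^ h = 1 := by
              rw [← hzsq, ← pow_mul]
              rw [show 2 * h = Nat.card C by omega] at *
              exact hcon
            have := orderOf_dvd_iff_pow_eq_one.mpr hxh
            rw [hxn] at this
            have := Nat.le_of_dvd hhpos this
            omega
          obtain ⟨s, hs⟩ := hd1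
          have hs2 : s ∣ 2 := by
            have h2' : orderOf z ∣ Nat.card C * 2 := by rw [mul_comm]; exact hd2
            have h3' : Nat.card C * s ∣ Nat.card C * 2 := hs ▸ h2'
            exact (Nat.mul_dvd_mul_iff_left hn0).mp h3'
          rcases (Nat.dvd_prime Nat.prime_two).mp hs2 with hs1 | hs1
          · exfalso
            apply hzn
            rw [show Nat.card C = orderOf z by rw [hs, hs1, mul_one]]
            exact pow_orderOf_eq_one z
          · rw [hs, hs1]; ring
        exact Or.inr (Or.inr (cyclic_case δ z hE hzord))
    · -- orderOf x = 2n : cyclic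
      have hx2n : orderOf x = 2 * Nat.card C := by rw [ht, ht1]; ring
      exact Or.inr (Or.inr (cyclic_case δ x hE hx2n))


open Matrix
open scoped commutatorElement

private theorem GL_diag_ne {K : Type*} [Field K] (A : GL (Fin 2) K)
    (h1 : (A : Matrix (Fin 2) (Fin 2) K) 0 1 = 0) (h2 : (A : Matrix (Fin 2) (Fin 2) K) 1 0 = 0) :
    (A : Matrix (Fin 2) (Fin 2) K) 0 0 ≠ 0 ∧ (A : Matrix (Fin 2) (Fin 2) K) 1 1 ≠ 0 := by
  have hdet : IsUnit (A : Matrix (Fin 2) (Fin 2) K).det := (Matrix.isUnit_iff_isUnit_det _).mp A.isUnit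
  rw [Matrix.det_fin_two, h1, h2] at hdet
  have hne := hdet.ne_zero
  constructor <;> intro h <;> apply hne <;> rw [h] <;> ring

private theorem GL_anti_ne {K : Type*} [Field K] (A : GL (Fin 2) K)
    (h1 : (A : Matrix (Fin 2) (Fin 2) K) 0 0 = 0) (h2 : (A : Matrix (Fin 2) (Fin 2) K) 1 1 = 0) :
    (A : Matrix (Fin 2) (Fin 2) K) 0 1 ≠ 0 ∧ (A : Matrix (Fin 2) (Fin 2) K) 1 0 ≠ 0 := by
  have hdet : IsUnit (A : Matrix (Fin 2) (Fin 2) K).det := (Matrix.isUnit_iff_isUnit_det _).mp A.isUnit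
  rw [Matrix.det_fin_two, h1, h2] at hdet
  have hne := hdet.ne_zero
  constructor <;> intro h <;> apply hne <;> rw [h] <;> ring

private theorem GL_mul_entry {K : Type*} [Field K] (A B : GL (Fin 2) K) (i j : Fin 2) :
    ((A * B : GL (Fin 2) K) : Matrix (Fin 2) (Fin 2) K) i j =
      (A : Matrix (Fin 2) (Fin 2) K) i 0 * (B : Matrix (Fin 2) (Fin 2) K) 0 j +
      (A : Matrix (Fin 2) (Fin 2) K) i 1 * (B : Matrix (Fin 2) (Fin 2) K) 1 j := by
  show ((A : Matrix (Fin 2) (Fin 2) K) * (B : Matrix (Fin 2) (Fin 2) K)) i j = _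
  rw [Matrix.mul_apply, Fin.sum_univ_two]

private theorem GL_inv_diag {K : Type*} [Field K] (A : GL (Fin 2) K)
    (h1 : (A : Matrix (Fin 2) (Fin 2) K) 0 1 = 0) (h2 : (A : Matrix (Fin 2) (Fin 2) K) 1 0 = 0) :
    ((A⁻¹ : GL (Fin 2) K) : Matrix (Fin 2) (Fin 2) K) =
      Matrix.of ![![((A : Matrix (Fin 2) (Fin 2) K) 0 0)⁻¹, 0],
        ![0, ((A : Matrix (Fin 2) (Fin 2) K) 1 1)⁻¹]] := by
  obtain ⟨ha, hd⟩ := GL_diag_ne A h1 h2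
  apply Units.inv_eq_of_mul_eq_one_right
  ext i j
  fin_cases i <;> fin_cases j <;>
    simp [Matrix.mul_apply, Fin.sum_univ_two, h1, h2, Matrix.one_apply, mul_inv_cancel₀, ha, hd]

private theorem GL_inv_anti {K : Type*} [Field K] (A : GL (Fin 2) K)
    (h1 : (A : Matrix (Fin 2) (Fin 2) K) 0 0 = 0) (h2 : (A : Matrix (Fin 2) (Fin 2) K) 1 1 = 0) :
    ((A⁻¹ : GL (Fin 2) K) : Matrix (Fin 2) (Fin 2) K) =
      Matrix.of ![![0, ((A : Matrix (Fin 2) (Fin 2) K) 1 0)⁻¹],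
        ![((A : Matrix (Fin 2) (Fin 2) K) 0 1)⁻¹, 0]] := by
  obtain ⟨hb, hc⟩ := GL_anti_ne A h1 h2
  apply Units.inv_eq_of_mul_eq_one_right
  ext i j
  fin_cases i <;> fin_cases j <;>
    simp [Matrix.mul_apply, Fin.sum_univ_two, h1, h2, Matrix.one_apply, mul_inv_cancel₀, hb, hc]

private theorem GL_comm_entry {K : Type*} [Field K] (w h : GL (Fin 2) K)
    (hw0 : (w : Matrix (Fin 2) (Fin 2) K) 0 0 = 0) (hw1 : (w : Matrix (Fin 2) (Fin 2) K) 1 1 = 0)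
    (hh1 : (h : Matrix (Fin 2) (Fin 2) K) 0 1 = 0) (hh2 : (h : Matrix (Fin 2) (Fin 2) K) 1 0 = 0) :
    ((⁅w, h⁆ : GL (Fin 2) K) : Matrix (Fin 2) (Fin 2) K) =
      Matrix.of ![![(h : Matrix (Fin 2) (Fin 2) K) 1 1 / (h : Matrix (Fin 2) (Fin 2) K) 0 0, 0],
        ![0, (h : Matrix (Fin 2) (Fin 2) K) 0 0 / (h : Matrix (Fin 2) (Fin 2) K) 1 1]] := by
  obtain ⟨hb, hc⟩ := GL_anti_ne w hw0 hw1
  obtain ⟨ha, hd⟩ := GL_diag_ne h hh1 hh2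
  have e1 := GL_inv_anti w hw0 hw1
  have e2 := GL_inv_diag h hh1 hh2
  show ((w * h * w⁻¹ * h⁻¹ : GL (Fin 2) K) : Matrix (Fin 2) (Fin 2) K) = _
  ext i j
  fin_cases i <;> fin_cases j <;>
    · simp only [GL_mul_entry, e1, e2, hw0, hw1, hh1, hh2, Matrix.of_apply, Matrix.cons_val',
        Matrix.cons_val_zero, Matrix.cons_val_one, Matrix.head_cons, Matrix.empty_val',
        Matrix.cons_val_fin_one, Matrix.head_fin_const]
      field_simp
      try simp [hw0, hw1, hh1, hh2]
      try ring

private theorem GL_invol {K : Type*} [Field K] (τ : GL (Fin 2) K)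
    (htr : Matrix.trace ((τ : Matrix (Fin 2) (Fin 2) K)) = 0)
    (hdet : (τ : Matrix (Fin 2) (Fin 2) K).det = -1) : τ ^ 2 = 1 := by
  have htr' : (τ : Matrix (Fin 2) (Fin 2) K) 0 0 + (τ : Matrix (Fin 2) (Fin 2) K) 1 1 = 0 := by
    rw [← Matrix.trace_fin_two]; exact htr
  have hdet' : (τ : Matrix (Fin 2) (Fin 2) K) 0 0 * (τ : Matrix (Fin 2) (Fin 2) K) 1 1 -
      (τ : Matrix (Fin 2) (Fin 2) K) 0 1 * (τ : Matrix (Fin 2) (Fin 2) K) 1 0 = -1 := by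
    rw [← Matrix.det_fin_two]; exact hdet
  apply Units.ext
  show ((τ ^ 2 : GL (Fin 2) K) : Matrix (Fin 2) (Fin 2) K) = ((1 : GL (Fin 2) K) : Matrix (Fin 2) (Fin 2) K)
  rw [sq]
  ext i j
  rw [GL_mul_entry]
  show _ = (1 : Matrix (Fin 2) (Fin 2) K) i j
  fin_cases i <;> fin_cases j <;> simp only [Fin.mk_zero, Fin.mk_one, Fin.isValue]
  · norm_num [Matrix.one_apply]
    linear_combination (τ : Matrix (Fin 2) (Fin 2) K) 0 0 * htr' - hdet'
  · norm_num [Matrix.one_apply]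
    linear_combination (τ : Matrix (Fin 2) (Fin 2) K) 0 1 * htr'
  · norm_num [Matrix.one_apply]
    linear_combination (τ : Matrix (Fin 2) (Fin 2) K) 1 0 * htr'
  · norm_num [Matrix.one_apply]
    linear_combination (τ : Matrix (Fin 2) (Fin 2) K) 1 1 * htr' - hdet'

set_option maxHeartbeats 1600000 in
theorem abelianization_of_normalizer_split_cartan_subgroup (p : ℕ) (hp : p.Prime) (hodd : p ≠ 2)
    (G : Subgroup (GL (Fin 2) (ZMod p)))
    (hNs : ∀ A ∈ G,
      ((A : Matrix (Fin 2) (Fin 2) (ZMod p)) 0 1 = 0 ∧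
        (A : Matrix (Fin 2) (Fin 2) (ZMod p)) 1 0 = 0) ∨
      ((A : Matrix (Fin 2) (Fin 2) (ZMod p)) 0 0 = 0 ∧
        (A : Matrix (Fin 2) (Fin 2) (ZMod p)) 1 1 = 0))
    (hdet : ∀ u : (ZMod p)ˣ, ∃ A ∈ G, (A : Matrix (Fin 2) (Fin 2) (ZMod p)).det = u)
    (hG' : commutator ↥G ≠ ⊥) :
    (Nonempty (Abelianization ↥G ≃* (ZMod p)ˣ) ∨
      Nonempty (Abelianization ↥G ≃* (ZMod p)ˣ × Multiplicative (ZMod 2)) ∨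
      Nonempty (Abelianization ↥G ≃* Multiplicative (ZMod (2 * (p - 1))))) ∧
    ((∃ τ ∈ G, Matrix.trace (τ : Matrix (Fin 2) (Fin 2) (ZMod p)) = 0 ∧
        (τ : Matrix (Fin 2) (Fin 2) (ZMod p)).det = -1) →
      (Nonempty (Abelianization ↥G ≃* (ZMod p)ˣ) ∨
        Nonempty (Abelianization ↥G ≃* (ZMod p)ˣ × Multiplicative (ZMod 2)))) := by
  haveI : Fact p.Prime := ⟨hp⟩
  haveI : Finite (Abelianization ↥G) := Quotient.finite _
  have hcoe_mul : ∀ a b : ↥G, ((a * b : ↥G) : GL (Fin 2) (ZMod p)) =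
      (a : GL (Fin 2) (ZMod p)) * (b : GL (Fin 2) (ZMod p)) := fun _ _ => rfl
  -- existence of an antidiagonal element
  have hex_anti : ∃ w : ↥G, ((w : GL (Fin 2) (ZMod p)) : Matrix (Fin 2) (Fin 2) (ZMod p)) 0 0 = 0 ∧ ((w : GL (Fin 2) (ZMod p)) : Matrix (Fin 2) (Fin 2) (ZMod p)) 1 1 = 0 := by
    by_contra hcon
    push_neg at hcon
    have hdiag : ∀ g : ↥G, ((g : GL (Fin 2) (ZMod p)) : Matrix (Fin 2) (Fin 2) (ZMod p)) 0 1 = 0 ∧ ((g : GL (Fin 2) (ZMod p)) : Matrix (Fin 2) (Fin 2) (ZMod p)) 1 0 = 0 := by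
      intro g
      rcases hNs (↑g) g.2 with h | h
      · exact h
      · exact absurd h.2 (hcon g h.1)
    apply hG'
    rw [eq_bot_iff, commutator_def, Subgroup.commutator_le]
    intro g1 _ g2 _
    rw [Subgroup.mem_bot, commutatorElement_eq_one_iff_mul_comm]
    apply Subtype.ext
    apply Units.ext
    show (((g1 * g2 : ↥G) : GL (Fin 2) (ZMod p)) : Matrix (Fin 2) (Fin 2) (ZMod p)) = (((g2 * g1 : ↥G) : GL (Fin 2) (ZMod p)) : Matrix (Fin 2) (Fin 2) (ZMod p))
    rw [hcoe_mul, hcoe_mul]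
    ext i j
    rw [GL_mul_entry, GL_mul_entry]
    obtain ⟨h1a, h1b⟩ := hdiag g1
    obtain ⟨h2a, h2b⟩ := hdiag g2
    fin_cases i <;> fin_cases j <;> (simp [h1a, h1b, h2a, h2b]; try ring)
  obtain ⟨w, hw0, hw1⟩ := hex_anti
  -- the sign homomorphism
  let ε : ↥G →* ℤˣ :=
    { toFun := fun g => if ((g : GL (Fin 2) (ZMod p)) : Matrix (Fin 2) (Fin 2) (ZMod p)) 0 0 = 0 then -1 else 1
      map_one' := by
        show (if (((1 : ↥G) : GL (Fin 2) (ZMod p)) : Matrix (Fin 2) (Fin 2) (ZMod p)) 0 0 = 0 then (-1 : ℤˣ) else 1) = 1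
        rw [if_neg]
        rw [show ((1 : ↥G) : GL (Fin 2) (ZMod p)) = 1 from rfl,
          show ((1 : GL (Fin 2) (ZMod p)) : Matrix (Fin 2) (Fin 2) (ZMod p)) = 1 from rfl,
          Matrix.one_apply_eq]
        exact one_ne_zero
      map_mul' := by
        intro a b
        show (if (((a * b : ↥G) : GL (Fin 2) (ZMod p)) : Matrix (Fin 2) (Fin 2) (ZMod p)) 0 0 = 0 then (-1 : ℤˣ) else 1) =
          (if ((a : GL (Fin 2) (ZMod p)) : Matrix (Fin 2) (Fin 2) (ZMod p)) 0 0 = 0 then (-1 : ℤˣ) else 1) * (if ((b : GL (Fin 2) (ZMod p)) : Matrix (Fin 2) (Fin 2) (ZMod p)) 0 0 = 0 then (-1 : ℤˣ) else 1)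
        have hab00 : (((a * b : ↥G) : GL (Fin 2) (ZMod p)) : Matrix (Fin 2) (Fin 2) (ZMod p)) 0 0 =
            ((a : GL (Fin 2) (ZMod p)) : Matrix (Fin 2) (Fin 2) (ZMod p)) 0 0 * ((b : GL (Fin 2) (ZMod p)) : Matrix (Fin 2) (Fin 2) (ZMod p)) 0 0 + ((a : GL (Fin 2) (ZMod p)) : Matrix (Fin 2) (Fin 2) (ZMod p)) 0 1 * ((b : GL (Fin 2) (ZMod p)) : Matrix (Fin 2) (Fin 2) (ZMod p)) 1 0 := by
          rw [hcoe_mul, GL_mul_entry]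
        rcases hNs (↑a) a.2 with ha | ha <;> rcases hNs (↑b) b.2 with hb | hb
        · obtain ⟨ha0, -⟩ := GL_diag_ne _ ha.1 ha.2
          obtain ⟨hb0, -⟩ := GL_diag_ne _ hb.1 hb.2
          rw [if_neg (by rw [hab00, ha.1, hb.2]; simpa using mul_ne_zero ha0 hb0),
            if_neg ha0, if_neg hb0, one_mul]
        · obtain ⟨ha0, -⟩ := GL_diag_ne _ ha.1 ha.2
          rw [if_pos (by rw [hab00, ha.1, hb.1]; ring), if_neg ha0, if_pos hb.1, one_mul]
        · obtain ⟨hb0, -⟩ := GL_diag_ne _ hb.1 hb.2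
          rw [if_pos (by rw [hab00, ha.1, hb.2]; ring), if_pos ha.1, if_neg hb0, mul_one]
        · obtain ⟨ha1, -⟩ := GL_anti_ne _ ha.1 ha.2
          obtain ⟨-, hb2⟩ := GL_anti_ne _ hb.1 hb.2
          rw [if_neg (by rw [hab00, ha.1, hb.1]; simpa using mul_ne_zero ha1 hb2),
            if_pos ha.1, if_pos hb.1]
          decide }
  have hεval : ∀ g : ↥G, ε g = if ((g : GL (Fin 2) (ZMod p)) : Matrix (Fin 2) (Fin 2) (ZMod p)) 0 0 = 0 then -1 else 1 := fun g => rfl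
  -- kernel elements are diagonal with nonzero diagonal entries
  have hker_diag : ∀ g : ↥G, g ∈ ε.ker →
      ((g : GL (Fin 2) (ZMod p)) : Matrix (Fin 2) (Fin 2) (ZMod p)) 0 1 = 0 ∧ ((g : GL (Fin 2) (ZMod p)) : Matrix (Fin 2) (Fin 2) (ZMod p)) 1 0 = 0 ∧ ((g : GL (Fin 2) (ZMod p)) : Matrix (Fin 2) (Fin 2) (ZMod p)) 0 0 ≠ 0 ∧ ((g : GL (Fin 2) (ZMod p)) : Matrix (Fin 2) (Fin 2) (ZMod p)) 1 1 ≠ 0 := by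
    intro g hg
    rw [MonoidHom.mem_ker, hεval] at hg
    have h00 : ((g : GL (Fin 2) (ZMod p)) : Matrix (Fin 2) (Fin 2) (ZMod p)) 0 0 ≠ 0 := by
      intro h
      rw [if_pos h] at hg
      exact absurd hg (by decide)
    have hd : ((g : GL (Fin 2) (ZMod p)) : Matrix (Fin 2) (Fin 2) (ZMod p)) 0 1 = 0 ∧ ((g : GL (Fin 2) (ZMod p)) : Matrix (Fin 2) (Fin 2) (ZMod p)) 1 0 = 0 := by
      rcases hNs (↑g) g.2 with h | h
      · exact h
      · exact absurd h.1 h00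
    obtain ⟨hne1, hne2⟩ := GL_diag_ne _ hd.1 hd.2
    exact ⟨hd.1, hd.2, hne1, hne2⟩
  have hεw : ε w = -1 := by rw [hεval, if_pos hw0]
  -- the ratio homomorphism on the kernel of ε
  let ρ : ↥ε.ker →* (ZMod p)ˣ := MonoidHom.mk'
    (fun h => Units.mk0 ((((h : ↥G) : GL (Fin 2) (ZMod p)) : Matrix (Fin 2) (Fin 2) (ZMod p)) 1 1 / (((h : ↥G) : GL (Fin 2) (ZMod p)) : Matrix (Fin 2) (Fin 2) (ZMod p)) 0 0)
      (div_ne_zero (hker_diag (↑h) h.2).2.2.2 (hker_diag (↑h) h.2).2.2.1))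
    (by
      intro a b
      apply Units.ext
      show ((((a * b : ↥ε.ker) : ↥G) : GL (Fin 2) (ZMod p)) : Matrix (Fin 2) (Fin 2) (ZMod p)) 1 1 / ((((a * b : ↥ε.ker) : ↥G) : GL (Fin 2) (ZMod p)) : Matrix (Fin 2) (Fin 2) (ZMod p)) 0 0 =
        (((((a : ↥ε.ker) : ↥G) : GL (Fin 2) (ZMod p)) : Matrix (Fin 2) (Fin 2) (ZMod p)) 1 1 / ((((a : ↥ε.ker) : ↥G) : GL (Fin 2) (ZMod p)) : Matrix (Fin 2) (Fin 2) (ZMod p)) 0 0) *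
        (((((b : ↥ε.ker) : ↥G) : GL (Fin 2) (ZMod p)) : Matrix (Fin 2) (Fin 2) (ZMod p)) 1 1 / ((((b : ↥ε.ker) : ↥G) : GL (Fin 2) (ZMod p)) : Matrix (Fin 2) (Fin 2) (ZMod p)) 0 0)
      obtain ⟨ha1, ha2, ha3, ha4⟩ := hker_diag (↑a) a.2
      obtain ⟨hb1, hb2, hb3, hb4⟩ := hker_diag (↑b) b.2
      have e11 : ((((a * b : ↥ε.ker) : ↥G) : GL (Fin 2) (ZMod p)) : Matrix (Fin 2) (Fin 2) (ZMod p)) 1 1 =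
          (((a : ↥G) : GL (Fin 2) (ZMod p)) : Matrix (Fin 2) (Fin 2) (ZMod p)) 1 0 * (((b : ↥G) : GL (Fin 2) (ZMod p)) : Matrix (Fin 2) (Fin 2) (ZMod p)) 0 1 + (((a : ↥G) : GL (Fin 2) (ZMod p)) : Matrix (Fin 2) (Fin 2) (ZMod p)) 1 1 * (((b : ↥G) : GL (Fin 2) (ZMod p)) : Matrix (Fin 2) (Fin 2) (ZMod p)) 1 1 := by
        rw [show (((a * b : ↥ε.ker) : ↥G) : GL (Fin 2) (ZMod p)) =
          ((a : ↥G) : GL (Fin 2) (ZMod p)) * ((b : ↥G) : GL (Fin 2) (ZMod p)) from rfl, GL_mul_entry]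
      have e00 : ((((a * b : ↥ε.ker) : ↥G) : GL (Fin 2) (ZMod p)) : Matrix (Fin 2) (Fin 2) (ZMod p)) 0 0 =
          (((a : ↥G) : GL (Fin 2) (ZMod p)) : Matrix (Fin 2) (Fin 2) (ZMod p)) 0 0 * (((b : ↥G) : GL (Fin 2) (ZMod p)) : Matrix (Fin 2) (Fin 2) (ZMod p)) 0 0 + (((a : ↥G) : GL (Fin 2) (ZMod p)) : Matrix (Fin 2) (Fin 2) (ZMod p)) 0 1 * (((b : ↥G) : GL (Fin 2) (ZMod p)) : Matrix (Fin 2) (Fin 2) (ZMod p)) 1 0 := by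
        rw [show (((a * b : ↥ε.ker) : ↥G) : GL (Fin 2) (ZMod p)) =
          ((a : ↥G) : GL (Fin 2) (ZMod p)) * ((b : ↥G) : GL (Fin 2) (ZMod p)) from rfl, GL_mul_entry]
      rw [e11, e00, ha1, ha2, hb1, hb2]
      field_simp
      try ring)
  have hρval : ∀ h : ↥ε.ker, (ρ h : ZMod p) = (((h : ↥G) : GL (Fin 2) (ZMod p)) : Matrix (Fin 2) (Fin 2) (ZMod p)) 1 1 / (((h : ↥G) : GL (Fin 2) (ZMod p)) : Matrix (Fin 2) (Fin 2) (ZMod p)) 0 0 :=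
    fun h => rfl
  -- cardinalities
  have hcard_units_int : Nat.card ℤˣ = 2 := by rw [Nat.card_eq_fintype_card]; decide
  have hrange_top : ε.range = ⊤ := by
    rw [eq_top_iff]
    intro u _
    rcases Int.units_eq_one_or u with h | h
    · exact h ▸ ⟨1, map_one ε⟩
    · exact h ▸ ⟨w, hεw⟩
  have hGcard : Nat.card ↥G = 2 * Nat.card ↥ε.ker := by
    rw [Subgroup.card_eq_card_quotient_mul_card_subgroup ε.ker]
    congr 1
    rw [Nat.card_congr (QuotientGroup.quotientKerEquivRange ε).toEquiv, hrange_top,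
      Subgroup.card_top, hcard_units_int]
  have hHcard : Nat.card ↥ε.ker = Nat.card ↥ρ.range * Nat.card ↥ρ.ker := by
    rw [Subgroup.card_eq_card_quotient_mul_card_subgroup ρ.ker]
    congr 1
    exact Nat.card_congr (QuotientGroup.quotientKerEquivRange ρ).toEquiv
  have hcardU : Nat.card (ZMod p)ˣ = p - 1 := by
    rw [Nat.card_eq_fintype_card, ZMod.card_units]
  have hZle : Nat.card ↥ρ.ker ≤ p - 1 := by
    rw [← hcardU]
    apply Nat.card_le_card_of_injective
      (fun z : ↥ρ.ker => Units.mk0 (((((z : ↥ε.ker) : ↥G) : GL (Fin 2) (ZMod p)) : Matrix (Fin 2) (Fin 2) (ZMod p)) 0 0)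
        (hker_diag (↑(z : ↥ε.ker)) (z : ↥ε.ker).2).2.2.1)
    intro z1 z2 hz
    have h00 : ((((z1 : ↥ε.ker) : ↥G) : GL (Fin 2) (ZMod p)) : Matrix (Fin 2) (Fin 2) (ZMod p)) 0 0 = ((((z2 : ↥ε.ker) : ↥G) : GL (Fin 2) (ZMod p)) : Matrix (Fin 2) (Fin 2) (ZMod p)) 0 0 :=
      congrArg Units.val hz
    have he : ∀ z : ↥ρ.ker, ((((z : ↥ε.ker) : ↥G) : GL (Fin 2) (ZMod p)) : Matrix (Fin 2) (Fin 2) (ZMod p)) 1 1 = ((((z : ↥ε.ker) : ↥G) : GL (Fin 2) (ZMod p)) : Matrix (Fin 2) (Fin 2) (ZMod p)) 0 0 := by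
      intro z
      have hv : ((((z : ↥ε.ker) : ↥G) : GL (Fin 2) (ZMod p)) : Matrix (Fin 2) (Fin 2) (ZMod p)) 1 1 / ((((z : ↥ε.ker) : ↥G) : GL (Fin 2) (ZMod p)) : Matrix (Fin 2) (Fin 2) (ZMod p)) 0 0 = 1 := by
        have hzk : ρ (z : ↥ε.ker) = 1 := z.2
        rw [← hρval, hzk, Units.val_one]
      exact (div_eq_one_iff_eq (hker_diag _ (z : ↥ε.ker).2).2.2.1).mp hv
    apply Subtype.ext
    apply Subtype.ext
    apply Subtype.ext
    apply Units.ext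
    ext i j
    obtain ⟨ha1, ha2, -, -⟩ := hker_diag _ (z1 : ↥ε.ker).2
    obtain ⟨hb1, hb2, -, -⟩ := hker_diag _ (z2 : ↥ε.ker).2
    fin_cases i <;> fin_cases j <;> simp only [Fin.mk_zero, Fin.mk_one, Fin.isValue]
    · exact h00
    · rw [ha1, hb1]
    · rw [ha2, hb2]
    · rw [he z1, he z2, h00]
  have hTle : Nat.card ↥ρ.range ≤ Nat.card ↥(commutator ↥G) := by
    have hmem : ∀ h : ↥ε.ker, ⁅w, (h : ↥G)⁆ ∈ commutator ↥G := by
      intro h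
      rw [commutator_def]
      exact Subgroup.commutator_mem_commutator (Subgroup.mem_top _) (Subgroup.mem_top _)
    have hcomm_val : ∀ h : ↥ε.ker, (((⁅w, (h : ↥G)⁆ : ↥G) : GL (Fin 2) (ZMod p)) : Matrix (Fin 2) (Fin 2) (ZMod p)) =
        Matrix.of ![![(((h : ↥G) : GL (Fin 2) (ZMod p)) : Matrix (Fin 2) (Fin 2) (ZMod p)) 1 1 / (((h : ↥G) : GL (Fin 2) (ZMod p)) : Matrix (Fin 2) (Fin 2) (ZMod p)) 0 0, 0],
          ![0, (((h : ↥G) : GL (Fin 2) (ZMod p)) : Matrix (Fin 2) (Fin 2) (ZMod p)) 0 0 / (((h : ↥G) : GL (Fin 2) (ZMod p)) : Matrix (Fin 2) (Fin 2) (ZMod p)) 1 1]] := by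
      intro h
      obtain ⟨h1, h2, -, -⟩ := hker_diag _ h.2
      rw [show ((⁅w, (h : ↥G)⁆ : ↥G) : GL (Fin 2) (ZMod p)) =
        ⁅(w : GL (Fin 2) (ZMod p)), ((h : ↥G) : GL (Fin 2) (ZMod p))⁆ from rfl]
      exact GL_comm_entry _ _ hw0 hw1 h1 h2
    apply Nat.card_le_card_of_injective
      (fun t : ↥ρ.range => (⟨⁅w, ((t.2.choose : ↥ε.ker) : ↥G)⁆, hmem t.2.choose⟩ :
        ↥(commutator ↥G)))
    intro t1 t2 ht
    have hval : (((⁅w, ((t1.2.choose : ↥ε.ker) : ↥G)⁆ : ↥G) : GL (Fin 2) (ZMod p)) : Matrix (Fin 2) (Fin 2) (ZMod p)) 0 0 =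
        (((⁅w, ((t2.2.choose : ↥ε.ker) : ↥G)⁆ : ↥G) : GL (Fin 2) (ZMod p)) : Matrix (Fin 2) (Fin 2) (ZMod p)) 0 0 := by
      have := congrArg (fun x : ↥(commutator ↥G) => (((x : ↥G) : GL (Fin 2) (ZMod p)) :
        Matrix (Fin 2) (Fin 2) (ZMod p)) 0 0) ht
      exact this
    rw [hcomm_val, hcomm_val] at hval
    simp only [Matrix.of_apply, Matrix.cons_val', Matrix.cons_val_zero, Matrix.empty_val',
      Matrix.cons_val_fin_one] at hval
    have hρ12 : ρ t1.2.choose = ρ t2.2.choose := by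
      apply Units.ext
      rw [hρval, hρval]
      exact hval
    apply Subtype.ext
    rw [← t1.2.choose_spec, ← t2.2.choose_spec, hρ12]
  -- the total cardinality bound
  have hcomm_pos : 0 < Nat.card ↥(commutator ↥G) := Nat.card_pos
  have hppos : 0 < p - 1 := by have := hp.two_le; omega
  have hEcardmul : Nat.card (Abelianization ↥G) * Nat.card ↥(commutator ↥G) = Nat.card ↥G :=
    (Subgroup.card_eq_card_quotient_mul_card_subgroup (commutator ↥G)).symm
  have hEle : Nat.card (Abelianization ↥G) ≤ 2 * (p - 1) := by
    have h1 : Nat.card (Abelianization ↥G) * Nat.card ↥(commutator ↥G) ≤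
        2 * (p - 1) * Nat.card ↥(commutator ↥G) := by
      rw [hEcardmul, hGcard, hHcard]
      calc 2 * (Nat.card ↥ρ.range * Nat.card ↥ρ.ker)
          ≤ 2 * (Nat.card ↥ρ.range * (p - 1)) := by
            exact Nat.mul_le_mul_left 2 (Nat.mul_le_mul_left _ hZle)
        _ ≤ 2 * (Nat.card ↥(commutator ↥G) * (p - 1)) := by
            exact Nat.mul_le_mul_left 2 (Nat.mul_le_mul_right _ hTle)
        _ = 2 * (p - 1) * Nat.card ↥(commutator ↥G) := by ring
    exact Nat.le_of_mul_le_mul_right h1 hcomm_pos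
  -- the determinant homomorphism on the abelianization
  let detG : ↥G →* (ZMod p)ˣ := (Matrix.GeneralLinearGroup.det).comp G.subtype
  let δ : Abelianization ↥G →* (ZMod p)ˣ := Abelianization.lift detG
  have hδo : ∀ g : ↥G, δ (Abelianization.of g) =
      Matrix.GeneralLinearGroup.det (g : GL (Fin 2) (ZMod p)) := fun g => rfl
  have hδsurj : Function.Surjective ⇑δ := by
    intro u
    obtain ⟨A, hA, hdA⟩ := hdet u
    refine ⟨Abelianization.of ⟨A, hA⟩, ?_⟩
    apply Units.ext
    rw [hδo, Matrix.GeneralLinearGroup.val_det_apply]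
    exact hdA
  have heven : Even (Nat.card (ZMod p)ˣ) := by
    rw [hcardU]
    obtain ⟨k, hk⟩ := hp.odd_of_ne_two hodd
    exact ⟨k, by omega⟩
  have hclass := abstract_classify δ hδsurj heven (by rw [hcardU]; exact hEle)
  rw [hcardU] at hclass
  constructor
  · rcases hclass with h | h | ⟨h, -⟩
    · exact Or.inl h
    · exact Or.inr (Or.inl h)
    · exact Or.inr (Or.inr h)
  · rintro ⟨τ, hτG, htr, hdetτ⟩
    rcases hclass with h | h | ⟨-, hprop⟩
    · exact Or.inl h
    · exact Or.inr h
    · exfalso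
      have hτ2 : (⟨τ, hτG⟩ : ↥G) ^ 2 = 1 := by
        apply Subtype.ext
        show τ ^ 2 = 1
        exact GL_invol τ htr hdetτ
      have ht2 : (Abelianization.of (⟨τ, hτG⟩ : ↥G)) ^ 2 = 1 := by
        rw [← map_pow, hτ2]
        exact _root_.map_one Abelianization.of
      have hδτ := hprop _ ht2
      have hv : (τ : Matrix (Fin 2) (Fin 2) (ZMod p)).det = 1 := by
        have := congrArg Units.val hδτ
        rwa [hδo, Matrix.GeneralLinearGroup.val_det_apply, Units.val_one] at this
      rw [hdetτ] at hv
      have h2 : ((2 : ℕ) : ZMod p) = 0 := by push_cast; linear_combination -hv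
      rw [ZMod.natCast_eq_zero_iff] at h2
      exact hodd ((Nat.prime_dvd_prime_iff_eq hp Nat.prime_two).mp h2)
end
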